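/- Fix k > 0 and d > 0. Define G(φ) = ((1/k)·log(cosh(kd) + φ·sinh(kd)) - φ·d)·(1 - φ²)^{-1} for φ ∈ (-1, 1). Then G is (weakly) decreasing on (-1, 1). -/

import Mathlib

lemma Epos (c0 s0 : ℝ) (hc0 : 0 < c0) (h1 : c0 ^ 2 - s0 ^ 2 = 1) (a : ℝ) :
    0 < Real.cosh a * c0 + Real.sinh a * s0 := by
  have h2 : Real.cosh a ^ 2 - Real.sinh a ^ 2 = 1 := Real.cosh_sq_sub_sinh_sq a
  have hca : (0:ℝ) < Real.cosh a := Real.cosh_pos a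
  nlinarith [abs_nonneg (Real.sinh a * s0), neg_abs_le (Real.sinh a * s0),
    sq_abs (Real.sinh a * s0), sq_nonneg (Real.cosh a * c0 - |Real.sinh a * s0|),
    mul_pos hca hc0]

lemma keyP (c0 s0 : ℝ) (hc0 : 0 < c0) (h1 : c0 ^ 2 - s0 ^ 2 = 1) (a : ℝ) (ha : 0 ≤ a) :
    2 * s0 * c0 * (Real.log (Real.cosh a * c0 + Real.sinh a * s0) - Real.log c0 - a * (s0 / c0))
      + c0 ^ 2 * ((Real.sinh a * c0 + Real.cosh a * s0) / (Real.cosh a * c0 + Real.sinh a * s0)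
        - s0 / c0) - a ≤ 0 := by
  set F : ℝ → ℝ := fun a =>
    2 * s0 * c0 * (Real.log (Real.cosh a * c0 + Real.sinh a * s0) - Real.log c0 - a * (s0 / c0))
      + c0 ^ 2 * ((Real.sinh a * c0 + Real.cosh a * s0) / (Real.cosh a * c0 + Real.sinh a * s0)
        - s0 / c0) - a with hF
  have hanti : Antitone F := by
    apply antitone_of_hasDerivAt_nonpos
      (f' := fun a => -(Real.sinh a ^ 2 / (Real.cosh a * c0 + Real.sinh a * s0) ^ 2))
    · intro x
      have hE := Epos c0 s0 hc0 h1 x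
      have hEne : Real.cosh x * c0 + Real.sinh x * s0 ≠ 0 := ne_of_gt hE
      have hc0ne : c0 ≠ 0 := ne_of_gt hc0
      have h2 : Real.cosh x ^ 2 - Real.sinh x ^ 2 = 1 := Real.cosh_sq_sub_sinh_sq x
      have hdE : HasDerivAt (fun a => Real.cosh a * c0 + Real.sinh a * s0)
          (Real.sinh x * c0 + Real.cosh x * s0) x :=
        ((Real.hasDerivAt_cosh x).mul_const c0).add ((Real.hasDerivAt_sinh x).mul_const s0)
      have hdS : HasDerivAt (fun a => Real.sinh a * c0 + Real.cosh a * s0)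
          (Real.cosh x * c0 + Real.sinh x * s0) x :=
        ((Real.hasDerivAt_sinh x).mul_const c0).add ((Real.hasDerivAt_cosh x).mul_const s0)
      have hdlog : HasDerivAt (fun a => Real.log (Real.cosh a * c0 + Real.sinh a * s0))
          ((Real.cosh x * c0 + Real.sinh x * s0)⁻¹ * (Real.sinh x * c0 + Real.cosh x * s0)) x :=
        by have := (Real.hasDerivAt_log hEne).comp x hdE; exact this
      have hd1 : HasDerivAt (fun a => Real.log (Real.cosh a * c0 + Real.sinh a * s0)
          - Real.log c0 - a * (s0 / c0))
          ((Real.cosh x * c0 + Real.sinh x * s0)⁻¹ * (Real.sinh x * c0 + Real.cosh x * s0)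
            - 1 * (s0 / c0)) x :=
        (hdlog.sub_const _).sub ((hasDerivAt_id x).mul_const _)
      have hd2 : HasDerivAt (fun a => (Real.sinh a * c0 + Real.cosh a * s0)
          / (Real.cosh a * c0 + Real.sinh a * s0) - s0 / c0)
          (((Real.cosh x * c0 + Real.sinh x * s0) * (Real.cosh x * c0 + Real.sinh x * s0)
            - (Real.sinh x * c0 + Real.cosh x * s0) * (Real.sinh x * c0 + Real.cosh x * s0))
            / (Real.cosh x * c0 + Real.sinh x * s0) ^ 2) x :=
        (hdS.div hdE hEne).sub_const _
      have hd : HasDerivAt F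
          (2 * s0 * c0 * ((Real.cosh x * c0 + Real.sinh x * s0)⁻¹
              * (Real.sinh x * c0 + Real.cosh x * s0) - 1 * (s0 / c0))
            + c0 ^ 2 * (((Real.cosh x * c0 + Real.sinh x * s0) * (Real.cosh x * c0 + Real.sinh x * s0)
              - (Real.sinh x * c0 + Real.cosh x * s0) * (Real.sinh x * c0 + Real.cosh x * s0))
              / (Real.cosh x * c0 + Real.sinh x * s0) ^ 2) - 1) x :=
        ((hd1.const_mul _).add (hd2.const_mul _)).sub ((hasDerivAt_id x).congr_deriv (by ring))
      convert hd using 1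
      have e2 : (Real.cosh x * c0 + Real.sinh x * s0) * (Real.cosh x * c0 + Real.sinh x * s0)
          - (Real.sinh x * c0 + Real.cosh x * s0) * (Real.sinh x * c0 + Real.cosh x * s0) = 1 := by
        linear_combination (c0 ^ 2 - s0 ^ 2) * h2 + h1
      rw [e2]
      have e1 : (Real.cosh x * c0 + Real.sinh x * s0)⁻¹ * (Real.sinh x * c0 + Real.cosh x * s0)
          - 1 * (s0 / c0) = Real.sinh x / ((Real.cosh x * c0 + Real.sinh x * s0) * c0) := by
        rw [inv_mul_eq_div, one_mul, div_sub_div _ _ hEne hc0ne]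
        congr 1
        linear_combination Real.sinh x * h1
      rw [e1]
      field_simp
      linear_combination (1 : ℝ) *
        (c0 ^ 2 * h2 + Real.sinh x ^ 2 * h1)
    · intro x
      exact neg_nonpos.2 (by positivity)
  have h0 : F 0 = 0 := by simp [hF]
  have := hanti ha
  rw [h0] at this
  exact this

theorem G_antitone (k d : ℝ) (hk : 0 < k) (hd : 0 < d) :
    AntitoneOn
      (fun φ : ℝ =>
        ((1 / k) * Real.log (Real.cosh (k * d) + φ * Real.sinh (k * d)) - φ * d) *
          (1 - φ ^ 2)⁻¹)
      (Set.Ioo (-1 : ℝ) 1) := by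
  have hkd : 0 < k * d := mul_pos hk hd
  set c : ℝ := Real.cosh (k * d) with hc
  set s : ℝ := Real.sinh (k * d) with hs
  have hspos : 0 < s := Real.sinh_pos_iff.2 hkd
  have hcs : c ^ 2 - s ^ 2 = 1 := Real.cosh_sq_sub_sinh_sq (k * d)
  have hEpos : ∀ φ : ℝ, -1 < φ → φ < 1 → 0 < c + φ * s := by
    intro φ h1 h2
    have hexp : c - s = Real.exp (-(k * d)) := Real.cosh_sub_sinh (k * d)
    nlinarith [Real.exp_pos (-(k * d)), mul_pos (show (0:ℝ) < 1 + φ by linarith) hspos]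
  -- the explicit derivative
  set f' : ℝ → ℝ := fun φ =>
    (1 / k * ((c + φ * s)⁻¹ * s) - d) * (1 - φ ^ 2)⁻¹ +
      (1 / k * Real.log (c + φ * s) - φ * d) * (2 * φ / (1 - φ ^ 2) ^ 2) with hf'
  have hderiv : ∀ φ ∈ Set.Ioo (-1:ℝ) 1, HasDerivAt
      (fun φ : ℝ => ((1 / k) * Real.log (c + φ * s) - φ * d) * (1 - φ ^ 2)⁻¹) (f' φ) φ := by
    rintro φ ⟨h1, h2⟩
    have hQ : 0 < 1 - φ ^ 2 := by nlinarith
    have hQne : (1 - φ ^ 2) ≠ 0 := ne_of_gt hQ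
    have hE := hEpos φ h1 h2
    have hEne : c + φ * s ≠ 0 := ne_of_gt hE
    have hid : HasDerivAt (fun x : ℝ => x * s) s φ := by
      simpa using (hasDerivAt_id φ).mul_const s
    have hEd : HasDerivAt (fun x : ℝ => c + x * s) s φ := hid.const_add c
    have hlog : HasDerivAt (fun x : ℝ => Real.log (c + x * s)) ((c + φ * s)⁻¹ * s) φ :=
      by have := (Real.hasDerivAt_log hEne).comp φ hEd; exact this
    have hB : HasDerivAt (fun x : ℝ => 1 / k * Real.log (c + x * s) - x * d)
        (1 / k * ((c + φ * s)⁻¹ * s) - d) φ :=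
      (hlog.const_mul (1 / k)).sub (by simpa using (hasDerivAt_id φ).mul_const d)
    have hQd : HasDerivAt (fun x : ℝ => 1 - x ^ 2) (-(2 * φ)) φ := by
      simpa using (hasDerivAt_pow 2 φ).const_sub 1
    have hQinv : HasDerivAt (fun x : ℝ => (1 - x ^ 2)⁻¹) (2 * φ / (1 - φ ^ 2) ^ 2) φ := by
      have := hQd.inv hQne
      refine this.congr_deriv ?_
      ring
    exact hB.mul hQinv
  have hnonpos : ∀ φ ∈ Set.Ioo (-1:ℝ) 1, f' φ ≤ 0 := by
    rintro φ ⟨h1, h2⟩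
    have hQ : 0 < 1 - φ ^ 2 := by nlinarith
    have hQne : (1 - φ ^ 2) ≠ 0 := ne_of_gt hQ
    have hE := hEpos φ h1 h2
    have hEne : c + φ * s ≠ 0 := ne_of_gt hE
    set c0 : ℝ := (Real.sqrt (1 - φ ^ 2))⁻¹ with hc0def
    have hsq : 0 < Real.sqrt (1 - φ ^ 2) := Real.sqrt_pos.2 hQ
    have hc0 : 0 < c0 := by positivity
    have hc0ne : c0 ≠ 0 := ne_of_gt hc0
    have hc0sq : c0 ^ 2 = (1 - φ ^ 2)⁻¹ := by
      rw [hc0def, inv_pow, Real.sq_sqrt hQ.le]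
    have hc0q : c0 ^ 2 * (1 - φ ^ 2) = 1 := by
      rw [hc0sq]; exact inv_mul_cancel₀ hQne
    have h1c : c0 ^ 2 - (φ * c0) ^ 2 = 1 := by linear_combination hc0q
    have hP := keyP c0 (φ * c0) hc0 h1c (k * d) hkd.le
    -- clean up hP
    have hPL : 2 * φ * (1 - φ ^ 2)⁻¹ * (Real.log (c + φ * s) - (k * d) * φ)
        + (1 - φ ^ 2)⁻¹ * ((s + c * φ) / (c + φ * s) - φ) - k * d ≤ 0 := by
      rw [show Real.cosh (k*d) * c0 + Real.sinh (k*d) * (φ * c0) = (c + φ * s) * c0 by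
        rw [← hc, ← hs]; ring, Real.log_mul hEne hc0ne,
        show Real.sinh (k*d) * c0 + Real.cosh (k*d) * (φ * c0) = (s + c * φ) * c0 by
          rw [← hc, ← hs]; ring,
        mul_div_mul_right _ _ hc0ne,
        show φ * c0 / c0 = φ by field_simp,
        add_sub_cancel_right] at hP
      refine le_trans (le_of_eq ?_) hP
      linear_combination (2 * φ * (Real.log (c + φ * s) - (k * d) * φ)
        + ((s + c * φ) / (c + φ * s) - φ)) * (- hc0sq)
    -- express f' φ in terms of the P-expression
    have hfeq : f' φ = (2 * φ * (1 - φ ^ 2)⁻¹ * (Real.log (c + φ * s) - (k * d) * φ)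
        + (1 - φ ^ 2)⁻¹ * ((s + c * φ) / (c + φ * s) - φ) - k * d) / (k * (1 - φ ^ 2)) := by
      rw [hf']
      field_simp
      ring
    rw [hfeq]
    exact div_nonpos_of_nonpos_of_nonneg hPL (by positivity)
  exact antitoneOn_of_hasDerivWithinAt_nonpos (convex_Ioo _ _)
    (fun φ hφ => ((hderiv φ hφ).continuousAt.continuousWithinAt))
    (fun φ hφ => by
      rw [interior_Ioo] at hφ
      exact ((hderiv φ hφ).hasDerivWithinAt))
    (fun φ hφ => by rw [interior_Ioo] at hφ; exact hnonpos φ hφ)
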